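/- Let ℰ be an exact category with enough projectives, let 𝒳 be a d-cluster tilting subcategory of the stable category ℰ̲, and set ℳ = {E ∈ ℰ : E̲ ∈ 𝒳}. Then for all M, M' ∈ ℳ, Ext^i_ℰ(M, M') = 0 for 1 ≤ i ≤ d−1. -/

import Mathlib

open CategoryTheory CategoryTheory.Limits ZeroObject

universe w w' v u

namespace Paper

variable (C : Type u) [Category.{v} C] [Preadditive C] [HasZeroObject C] [HasBinaryBiproducts C]

/-- A Quillen exact structure on an additive category: a class of distinguished
kernel-cokernel pairs (`ses f g` meaning `0 → X → Y → Z → 0` is a conflation)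
satisfying the axioms of exact categories. -/
structure ExactStructure where
  ses : ∀ ⦃X Y Z : C⦄, (X ⟶ Y) → (Y ⟶ Z) → Prop
  comp_zero : ∀ ⦃X Y Z : C⦄ {f : X ⟶ Y} {g : Y ⟶ Z}, ses f g → f ≫ g = 0
  isKernel : ∀ ⦃X Y Z : C⦄ {f : X ⟶ Y} {g : Y ⟶ Z} (h : ses f g),
      Nonempty (IsLimit (KernelFork.ofι f (comp_zero h)))
  isCokernel : ∀ ⦃X Y Z : C⦄ {f : X ⟶ Y} {g : Y ⟶ Z} (h : ses f g),
      Nonempty (IsColimit (CokernelCofork.ofπ g (comp_zero h)))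
  ses_id_zero : ∀ X : C, ses (𝟙 X) (0 : X ⟶ 0)
  ses_zero_id : ∀ X : C, ses (0 : (0 : C) ⟶ X) (𝟙 X)
  ses_split : ∀ X Y : C, ses (biprod.inl : X ⟶ X ⊞ Y) (biprod.snd : X ⊞ Y ⟶ Y)
  infl_comp : ∀ ⦃X Y Z : C⦄ {f : X ⟶ Y} {g : Y ⟶ Z},
      (∃ (U : C) (u : Y ⟶ U), ses f u) → (∃ (V : C) (v : Z ⟶ V), ses g v) →
      ∃ (W : C) (w : Z ⟶ W), ses (f ≫ g) w
  defl_comp : ∀ ⦃X Y Z : C⦄ {f : X ⟶ Y} {g : Y ⟶ Z},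
      (∃ (U : C) (u : U ⟶ X), ses u f) → (∃ (V : C) (v : V ⟶ Y), ses v g) →
      ∃ (W : C) (w : W ⟶ X), ses w (f ≫ g)
  pushout_infl : ∀ ⦃X Y Z : C⦄ (f : X ⟶ Y) (g : X ⟶ Z),
      (∃ (U : C) (u : Y ⟶ U), ses f u) →
      ∃ (W : C) (h : Y ⟶ W) (k : Z ⟶ W), (∃ (V : C) (v : W ⟶ V), ses k v) ∧ IsPushout f g h k
  pullback_defl : ∀ ⦃X Y Z : C⦄ (f : Y ⟶ X) (g : Z ⟶ X),
      (∃ (U : C) (u : U ⟶ Y), ses u f) →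
      ∃ (W : C) (h : W ⟶ Y) (k : W ⟶ Z), (∃ (V : C) (v : V ⟶ W), ses v h) ∧ IsPullback h k f g

variable {C}

/-- Admissible monomorphisms. -/
def ExactStructure.Inflation (E : ExactStructure C) {X Y : C} (f : X ⟶ Y) : Prop :=
  ∃ (Z : C) (g : Y ⟶ Z), E.ses f g

/-- Admissible epimorphisms. -/
def ExactStructure.Deflation (E : ExactStructure C) {Y Z : C} (g : Y ⟶ Z) : Prop :=
  ∃ (X : C) (f : X ⟶ Y), E.ses f g

/-- Projective objects with respect to an exact structure. -/
def ExactStructure.Proj (E : ExactStructure C) (P : C) : Prop :=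
  ∀ ⦃Y Z : C⦄ (g : Y ⟶ Z), E.Deflation g → ∀ h : P ⟶ Z, ∃ k : P ⟶ Y, k ≫ g = h

/-- The exact category has enough projectives. -/
def EnoughProj (E : ExactStructure C) : Prop :=
  ∀ X : C, ∃ (P : C) (p : P ⟶ X), E.Proj P ∧ E.Deflation p

/-- The stable relation: two morphisms are identified iff their difference factors
through a projective object. -/
def stableRel (E : ExactStructure C) : HomRel C := fun {X Y} f g =>
  ∃ (P : C) (a : X ⟶ P) (b : P ⟶ Y), E.Proj P ∧ a ≫ b = f - g

/-- The stable category `ℰ/𝒫`. -/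
abbrev St (E : ExactStructure C) := CategoryTheory.Quotient (stableRel E)

/-- The projection functor `ℰ → ℰ/𝒫`. -/
def stq (E : ExactStructure C) : C ⥤ St E := Quotient.functor _

end Paper

namespace Paper

variable {C : Type u} [Category.{v} C] [Preadditive C] [HasZeroObject C] [HasBinaryBiproducts C]

/-- An `n`-fold Yoneda extension `0 → B → X_n → ⋯ → X_1 → A → 0`, encoded
recursively by splicing off the leftmost conflation. -/
inductive NExt (E : ExactStructure C) : ℕ → C → C → Type (max u v)
  | one {A B Y : C} (f : B ⟶ Y) (g : Y ⟶ A) (h : E.ses f g) : NExt E 1 A B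
  | step {A B K Y : C} {n : ℕ} (f : B ⟶ Y) (g : Y ⟶ K) (h : E.ses f g)
      (ξ : NExt E n A K) : NExt E (n + 1) A B

/-- Morphisms of Yoneda extensions over given maps on the two end objects. -/
inductive NExtMor (E : ExactStructure C) :
    ∀ {n : ℕ} {A A' B B' : C}, (B ⟶ B') → (A ⟶ A') → NExt E n A B → NExt E n A' B' → Prop
  | one {A A' B B' Y Y' : C} {β : B ⟶ B'} {α : A ⟶ A'}
      {f : B ⟶ Y} {g : Y ⟶ A} {h : E.ses f g}
      {f' : B' ⟶ Y'} {g' : Y' ⟶ A'} {h' : E.ses f' g'}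
      (y : Y ⟶ Y') (hy₁ : f ≫ y = β ≫ f') (hy₂ : y ≫ g' = g ≫ α) :
      NExtMor E β α (NExt.one f g h) (NExt.one f' g' h')
  | step {n : ℕ} {A A' B B' K K' Y Y' : C} {β : B ⟶ B'} {α : A ⟶ A'}
      {f : B ⟶ Y} {g : Y ⟶ K} {h : E.ses f g} {ξ : NExt E n A K}
      {f' : B' ⟶ Y'} {g' : Y' ⟶ K'} {h' : E.ses f' g'} {ξ' : NExt E n A' K'}
      (y : Y ⟶ Y') (k : K ⟶ K') (hy₁ : f ≫ y = β ≫ f') (hy₂ : y ≫ g' = g ≫ k)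
      (tail : NExtMor E k α ξ ξ') :
      NExtMor E β α (NExt.step f g h ξ) (NExt.step f' g' h' ξ')

/-- Yoneda equivalence of `n`-extensions: the equivalence relation generated by
morphisms of extensions which are the identity on both end objects. -/
def ExtEquiv (E : ExactStructure C) {n : ℕ} {A B : C} (ξ ξ' : NExt E n A B) : Prop :=
  Relation.EqvGen (fun a b => NExtMor E (𝟙 B) (𝟙 A) a b) ξ ξ'

/-- The trivial `(n+1)`-extension of `A` by the zero object. -/
noncomputable def trivN (E : ExactStructure C) : (n : ℕ) → (A : C) → NExt E (n + 1) A (0 : C)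
  | 0, A => NExt.one (0 : (0 : C) ⟶ A) (𝟙 A) (E.ses_zero_id A)
  | n + 1, A => NExt.step (𝟙 (0 : C)) (0 : (0 : C) ⟶ (0 : C)) (E.ses_id_zero (0 : C)) (trivN E n A)

/-- The trivial (split) `(n+1)`-extension of `A` by `B`. -/
noncomputable def trivExt (E : ExactStructure C) : (n : ℕ) → (A B : C) → NExt E (n + 1) A B
  | 0, A, B => NExt.one (biprod.inl : B ⟶ B ⊞ A) (biprod.snd : B ⊞ A ⟶ A) (E.ses_split B A)
  | n + 1, A, B => NExt.step (𝟙 B) (0 : B ⟶ (0 : C)) (E.ses_id_zero B) (trivN E n A)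

/-- `extVanish E n A B` means `Ext^n_ℰ(A, B) = 0`: every `n`-fold Yoneda extension
of `A` by `B` is Yoneda-equivalent to the trivial one. -/
def extVanish (E : ExactStructure C) : ℕ → C → C → Prop
  | 0, _, _ => True
  | n + 1, A, B => ∀ ξ : NExt E (n + 1) A B, ExtEquiv E ξ (trivExt E n A B)

/-- `MRes E M n X` : there is an exact sequence `0 → M_n → ⋯ → M_1 → X → 0`
with all `M_j ∈ M`. -/
inductive MRes (E : ExactStructure C) (M : Set C) : ℕ → C → Prop
  | iso {X M₀ : C} (hM : M₀ ∈ M) (f : M₀ ⟶ X) (hf : IsIso f) : MRes E M 1 X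
  | step {X K M₀ : C} {n : ℕ} (hM : M₀ ∈ M) (i : K ⟶ M₀) (p : M₀ ⟶ X)
      (hses : E.ses i p) (hK : MRes E M n K) : MRes E M (n + 1) X

/-- `CoRes E M n X` : there is an exact sequence `0 → X → M^1 → ⋯ → M^n → 0`
with all `M^j ∈ M`. -/
inductive CoRes (E : ExactStructure C) (M : Set C) : ℕ → C → Prop
  | iso {X M₀ : C} (hM : M₀ ∈ M) (f : X ⟶ M₀) (hf : IsIso f) : CoRes E M 1 X
  | step {X K M₀ : C} {n : ℕ} (hM : M₀ ∈ M) (i : X ⟶ M₀) (p : M₀ ⟶ K)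
      (hses : E.ses i p) (hK : CoRes E M n K) : CoRes E M (n + 1) X

/-- Right `M`-approximations. -/
def RightApprox {D : Type w} [Category.{w'} D] (M : Set D) {M₀ X : D} (f : M₀ ⟶ X) : Prop :=
  ∀ M' ∈ M, ∀ g : M' ⟶ X, ∃ h : M' ⟶ M₀, h ≫ f = g

/-- Left `M`-approximations. -/
def LeftApprox {D : Type w} [Category.{w'} D] (M : Set D) {X M₀ : D} (f : X ⟶ M₀) : Prop :=
  ∀ M' ∈ M, ∀ g : X ⟶ M', ∃ h : M₀ ⟶ M', f ≫ h = g

/-- `d`-cluster tilting subcategory of an exact category (Definition 4.1). -/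
structure ClusterTiltingExact (E : ExactStructure C) (M : Set C) (d : ℕ) : Prop where
  contra : ∀ X : C, ∃ (M₀ : C) (f : M₀ ⟶ X), M₀ ∈ M ∧ RightApprox M f
  cova : ∀ X : C, ∃ (M₀ : C) (f : X ⟶ M₀), M₀ ∈ M ∧ LeftApprox M f
  gen : ∀ X : C, ∃ (M₀ : C) (f : M₀ ⟶ X), M₀ ∈ M ∧ E.Deflation f
  cogen : ∀ X : C, ∃ (M₀ : C) (f : X ⟶ M₀), M₀ ∈ M ∧ E.Inflation f
  eq_left : M = {X : C | ∀ M' ∈ M, ∀ i : ℕ, 1 ≤ i → i + 1 ≤ d → extVanish E i X M'}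
  eq_right : M = {X : C | ∀ M' ∈ M, ∀ i : ℕ, 1 ≤ i → i + 1 ≤ d → extVanish E i M' X}

/-- `dℤ`-cluster tilting subcategory of an exact category: `d`-cluster tilting and
`Ext^i(ℳ,ℳ) = 0` for `i ∉ dℤ`. -/
def ClusterTiltingExactDZ (E : ExactStructure C) (M : Set C) (d : ℕ) : Prop :=
  ClusterTiltingExact E M d ∧
    ∀ M₀ ∈ M, ∀ M₁ ∈ M, ∀ i : ℕ, 0 < i → ¬ (d ∣ i) → extVanish E i M₀ M₁

end Paper

namespace Paper

variable {C : Type u} [Category.{v} C] [Preadditive C] [HasZeroObject C] [HasBinaryBiproducts C]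

/-- Iterated composition power of an endofunctor. -/
def fpow {D : Type w} [Category.{w'} D] (F : D ⥤ D) : ℕ → D ⥤ D
  | 0 => 𝟭 D
  | n + 1 => fpow F n ⋙ F

/-- An `Ω`-sequence `Ω obj₃ → obj₁ → obj₂ → obj₃`. -/
structure LTTriangle (D : Type w) [Category.{w'} D] (Om : D ⥤ D) where
  obj₁ : D
  obj₂ : D
  obj₃ : D
  m₀ : Om.obj obj₃ ⟶ obj₁
  m₁ : obj₁ ⟶ obj₂
  m₂ : obj₂ ⟶ obj₃

/-- Isomorphism of `Ω`-sequences. -/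
def LTTriangle.IsoSeq {D : Type w} [Category.{w'} D] {Om : D ⥤ D}
    (T T' : LTTriangle D Om) : Prop :=
  ∃ (e₁ : T.obj₁ ≅ T'.obj₁) (e₂ : T.obj₂ ≅ T'.obj₂) (e₃ : T.obj₃ ≅ T'.obj₃),
    T.m₀ ≫ e₁.hom = Om.map e₃.hom ≫ T'.m₀ ∧
    T.m₁ ≫ e₂.hom = e₁.hom ≫ T'.m₁ ∧
    T.m₂ ≫ e₃.hom = e₂.hom ≫ T'.m₂

/-- A left triangulated structure on an additive category with endofunctor `Ω`
(Definition 3.1: axioms (T0)–(T5)). -/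
structure LeftTriangStruct (D : Type w) [Category.{w'} D] [Preadditive D] [HasZeroObject D]
    (Om : D ⥤ D) where
  dist : Set (LTTriangle D Om)
  omAdd : Om.Additive
  iso_closed : ∀ T T' : LTTriangle D Om, T ∈ dist → T.IsoSeq T' → T' ∈ dist
  contractible : ∀ X : D, LTTriangle.mk X X 0 0 (𝟙 X) 0 ∈ dist
  complete : ∀ {B Z : D} (w : B ⟶ Z),
      ∃ (A : D) (u : Om.obj Z ⟶ A) (v : A ⟶ B), LTTriangle.mk A B Z u v w ∈ dist
  rotate : ∀ T ∈ dist,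
      LTTriangle.mk (Om.obj T.obj₃) T.obj₁ T.obj₂ (-Om.map T.m₂) T.m₀ T.m₁ ∈ dist
  complete_mor : ∀ T T' : LTTriangle D Om, T ∈ dist → T' ∈ dist →
      ∀ (g : T.obj₂ ⟶ T'.obj₂) (h : T.obj₃ ⟶ T'.obj₃), T.m₂ ≫ h = g ≫ T'.m₂ →
      ∃ f : T.obj₁ ⟶ T'.obj₁, T.m₁ ≫ g = f ≫ T'.m₁ ∧ T.m₀ ≫ f = Om.map h ≫ T'.m₀
  octa : ∀ {A B Cc D₀ E₀ : D} {u : Om.obj Cc ⟶ A} {v : A ⟶ B} {w : B ⟶ Cc}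
      {f : Om.obj D₀ ⟶ E₀} {g : E₀ ⟶ Cc} {h : Cc ⟶ D₀},
      LTTriangle.mk A B Cc u v w ∈ dist → LTTriangle.mk E₀ Cc D₀ f g h ∈ dist →
      ∃ (F : D) (α : A ⟶ F) (i : Om.obj D₀ ⟶ F) (j : F ⟶ B) (β : F ⟶ E₀),
        LTTriangle.mk F B D₀ i j (w ≫ h) ∈ dist ∧
        LTTriangle.mk A F E₀ (Om.map g ≫ u) α β ∈ dist ∧
        u ≫ α = Om.map h ≫ i ∧ α ≫ j = v ∧ j ≫ w = β ≫ g

/-- A chain (tower) of triangles `Ω Z_{j-1} → Z_j → M_j → Z_{j-1}` with all middle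
terms `M_j` in `X`, used to encode `(d+2)`-angles. -/
inductive LTChain {D : Type w} [Category.{w'} D] [Preadditive D] [HasZeroObject D]
    {Om : D ⥤ D} (L : LeftTriangStruct D Om) (X : Set D) : ℕ → D → D → Prop
  | zero (A : D) : LTChain L X 0 A A
  | succ {n : ℕ} {A B B' M : D} (hc : LTChain L X n A B) (hM : M ∈ X)
      (u : Om.obj B ⟶ B') (v : B' ⟶ M) (w : M ⟶ B)
      (ht : LTTriangle.mk B' M B u v w ∈ L.dist) : LTChain L X (n + 1) A B'

/-- `d`-cluster tilting subcategory of a left triangulated category (Definition 5.1). -/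
structure ClusterTiltingLT {D : Type w} [Category.{w'} D] [Preadditive D] [HasZeroObject D]
    {Om : D ⥤ D} (L : LeftTriangStruct D Om) (X : Set D) (d : ℕ) : Prop where
  summand_closed : ∀ {A Z : D}, Z ∈ X → ∀ (s : A ⟶ Z) (r : Z ⟶ A), s ≫ r = 𝟙 A → A ∈ X
  /-- every object admits a `(d+2)`-angle `0 → C → X¹ → ⋯ → X^d → 0` with `Xⁱ ∈ X` -/
  cores : ∀ Cobj : D, ∃ Z₀ : D, IsZero Z₀ ∧ LTChain L X d Z₀ Cobj
  /-- every object admits a `(d+2)`-angle `0 → X_d → ⋯ → X_1 → C → 0` with `X_i ∈ X` -/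
  res : ∀ Cobj : D, ∃ (Z₀ Z₁ W : D) (u : Om.obj Z₀ ⟶ Z₁) (v : Z₁ ⟶ Cobj) (w : Cobj ⟶ Z₀),
      IsZero Z₀ ∧ LTTriangle.mk Z₁ Cobj Z₀ u v w ∈ L.dist ∧
      LTChain L X (d - 1) Z₁ W ∧ W ∈ X
  om_bij : ∀ (Cobj X₀ : D), X₀ ∈ X → ∀ i : ℕ, i + 2 ≤ d →
      Function.Bijective (fun f : (fpow Om i).obj X₀ ⟶ Cobj => Om.map f)
  hom_vanish : ∀ (X₀ X₁ : D), X₀ ∈ X → X₁ ∈ X → ∀ i : ℕ, 1 ≤ i → i + 1 ≤ d →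
      ∀ f : (fpow Om i).obj X₁ ⟶ X₀, f = 0

/-- `dℤ`-cluster tilting subcategory of a left triangulated category:
`d`-cluster tilting and `Ω^d(X) ⊆ X`. -/
def ClusterTiltingLTDZ {D : Type w} [Category.{w'} D] [Preadditive D] [HasZeroObject D]
    {Om : D ⥤ D} (L : LeftTriangStruct D Om) (X : Set D) (d : ℕ) : Prop :=
  ClusterTiltingLT L X d ∧ ∀ A ∈ X, (fpow Om d).obj A ∈ X

/-- A triangle `X → Y → Z → ΣX` for a suspension endofunctor. -/
structure Tri (T : Type w) [Category.{w'} T] (Sf : T ⥤ T) where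
  obj₁ : T
  obj₂ : T
  obj₃ : T
  m₁ : obj₁ ⟶ obj₂
  m₂ : obj₂ ⟶ obj₃
  m₃ : obj₃ ⟶ Sf.obj obj₁

/-- Isomorphism of candidate triangles. -/
def Tri.IsoTri {T : Type w} [Category.{w'} T] {Sf : T ⥤ T} (T₁ T₂ : Tri T Sf) : Prop :=
  ∃ (e₁ : T₁.obj₁ ≅ T₂.obj₁) (e₂ : T₁.obj₂ ≅ T₂.obj₂) (e₃ : T₁.obj₃ ≅ T₂.obj₃),
    T₁.m₁ ≫ e₂.hom = e₁.hom ≫ T₂.m₁ ∧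
    T₁.m₂ ≫ e₃.hom = e₂.hom ≫ T₂.m₂ ∧
    T₁.m₃ ≫ Sf.map e₁.hom = e₃.hom ≫ T₂.m₃

/-- `dist` is a triangulated structure on `T` with suspension the equivalence `Se`
(the classical Verdier axioms TR0–TR4). -/
structure TriangStructOn (T : Type w) [Category.{w'} T] [Preadditive T] [HasZeroObject T]
    (Se : T ≌ T) (dist : Set (Tri T Se.functor)) : Prop where
  iso_closed : ∀ T₁ T₂ : Tri T Se.functor, T₁ ∈ dist → T₁.IsoTri T₂ → T₂ ∈ dist
  id_tri : ∀ X : T, Tri.mk X X 0 (𝟙 X) 0 0 ∈ dist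
  complete : ∀ {X Y : T} (f : X ⟶ Y),
      ∃ (Z : T) (g : Y ⟶ Z) (h : Z ⟶ Se.functor.obj X), Tri.mk X Y Z f g h ∈ dist
  rotate : ∀ T₁ ∈ dist,
      Tri.mk T₁.obj₂ T₁.obj₃ (Se.functor.obj T₁.obj₁) T₁.m₂ T₁.m₃ (-(Se.functor.map T₁.m₁)) ∈ dist
  unrotate : ∀ {X Y Z : T} (f : X ⟶ Y) (g : Y ⟶ Z) (h : Z ⟶ Se.functor.obj X),
      Tri.mk Y Z (Se.functor.obj X) g h (-(Se.functor.map f)) ∈ dist →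
      Tri.mk X Y Z f g h ∈ dist
  complete_mor : ∀ T₁ T₂ : Tri T Se.functor, T₁ ∈ dist → T₂ ∈ dist →
      ∀ (a : T₁.obj₁ ⟶ T₂.obj₁) (b : T₁.obj₂ ⟶ T₂.obj₂), T₁.m₁ ≫ b = a ≫ T₂.m₁ →
      ∃ c : T₁.obj₃ ⟶ T₂.obj₃, T₁.m₂ ≫ c = b ≫ T₂.m₂ ∧ T₁.m₃ ≫ Se.functor.map a = c ≫ T₂.m₃
  octa : ∀ {X Y Z U V W : T} (u : X ⟶ Y) (v : Y ⟶ Z) (a : Y ⟶ U) (a' : U ⟶ Se.functor.obj X)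
      (b : Z ⟶ V) (b' : V ⟶ Se.functor.obj Y) (c : Z ⟶ W) (c' : W ⟶ Se.functor.obj X),
      Tri.mk X Y U u a a' ∈ dist → Tri.mk Y Z V v b b' ∈ dist →
      Tri.mk X Z W (u ≫ v) c c' ∈ dist →
      ∃ (f₁ : U ⟶ W) (f₂ : W ⟶ V),
        Tri.mk U W V f₁ f₂ (b' ≫ Se.functor.map a) ∈ dist ∧
        a ≫ f₁ = v ≫ c ∧ f₁ ≫ c' = a' ∧ c ≫ f₂ = b ∧ f₂ ≫ b' = c' ≫ Se.functor.map u

/-- `d`-cluster tilting subcategory of a category with suspension functor `Sf`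
(the triangulated-sense definition, Definition 4.1 with `Ext^i(X,Y) = Hom(X, Σ^i Y)`). -/
structure ClusterTiltingTri (T : Type w) [Category.{w'} T] [Preadditive T]
    (Sf : T ⥤ T) (M : Set T) (d : ℕ) : Prop where
  contra : ∀ X : T, ∃ (M₀ : T) (f : M₀ ⟶ X), M₀ ∈ M ∧ RightApprox M f
  cova : ∀ X : T, ∃ (M₀ : T) (f : X ⟶ M₀), M₀ ∈ M ∧ LeftApprox M f
  eq_left : M = {Eo : T | ∀ M' ∈ M, ∀ i : ℕ, 1 ≤ i → i + 1 ≤ d →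
      ∀ f : Eo ⟶ (fpow Sf i).obj M', f = 0}
  eq_right : M = {Eo : T | ∀ M' ∈ M, ∀ i : ℕ, 1 ≤ i → i + 1 ≤ d →
      ∀ f : M' ⟶ (fpow Sf i).obj Eo, f = 0}

/-- `dℤ`-cluster tilting subcategory in the triangulated sense:
`d`-cluster tilting and `Σ^d(M) ⊆ M`. -/
def ClusterTiltingTriDZ (T : Type w) [Category.{w'} T] [Preadditive T]
    (Sf : T ⥤ T) (M : Set T) (d : ℕ) : Prop :=
  ClusterTiltingTri T Sf M d ∧ ∀ A ∈ M, (fpow Sf d).obj A ∈ M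

/-- Integer powers of an auto-equivalence. -/
def zpow {T : Type w} [Category.{w'} T] (Se : T ≌ T) : ℤ → T ⥤ T
  | Int.ofNat n => fpow Se.functor n
  | Int.negSucc n => fpow Se.inverse (n + 1)

end Paper

namespace Paper

variable {C : Type u} [Category.{v} C] [Preadditive C] [HasZeroObject C] [HasBinaryBiproducts C]

/-- Raising a morphism `Ω^a X ⟶ Ω^b Y` by applying `F` `j` more times. -/
def raiseN {D : Type w} [Category.{w'} D] (F : D ⥤ D) :
    ∀ (j : ℕ) {X Y : D} {a b : ℕ},
      ((fpow F a).obj X ⟶ (fpow F b).obj Y) → ((fpow F (a + j)).obj X ⟶ (fpow F (b + j)).obj Y)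
  | 0, _, _, _, _, f => f
  | j + 1, _, _, _, _, f => F.map (raiseN F j f)

/-- `S` is (a realization of) the stabilization `ℤD` of the category `D` with respect
to the endofunctor `F`: objects are pairs `(X, n)`, `X ∈ D`, `n ∈ ℤ`, and
`Hom((X,m),(Y,n)) = colim_k Hom(F^{m+k} X, F^{n+k} Y)`.  The data consists of the
objects `obj X n` together with the structure maps `lift` into the colimit, and the
axioms say exactly that the hom groups are the filtered colimits above and that every
object of `S` is isomorphic to some `(X, n)`. -/
structure IsStabilization {D : Type u'} [Category.{v'} D] [Preadditive D] (F : D ⥤ D)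
    (S : Type w) [Category.{w'} S] [Preadditive S] where
  obj : D → ℤ → S
  lift : ∀ {X Y : D} (a b : ℕ) (m n : ℤ), (a : ℤ) + n = (b : ℤ) + m →
      (((fpow F a).obj X) ⟶ ((fpow F b).obj Y)) → (obj X m ⟶ obj Y n)
  lift_raise : ∀ {X Y : D} (a b : ℕ) (m n : ℤ) (h : (a : ℤ) + n = (b : ℤ) + m)
      (h' : ((a + 1 : ℕ) : ℤ) + n = ((b + 1 : ℕ) : ℤ) + m)
      (f : (fpow F a).obj X ⟶ (fpow F b).obj Y),
      lift (a + 1) (b + 1) m n h' (F.map f) = lift a b m n h f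
  lift_id : ∀ {X : D} (a : ℕ) (n : ℤ) (h : (a : ℤ) + n = (a : ℤ) + n),
      lift a a n n h (𝟙 ((fpow F a).obj X)) = 𝟙 (obj X n)
  lift_comp : ∀ {X Y Z : D} (a b c : ℕ) (m n p : ℤ)
      (hab : (a : ℤ) + n = (b : ℤ) + m) (hbc : (b : ℤ) + p = (c : ℤ) + n)
      (hac : (a : ℤ) + p = (c : ℤ) + m)
      (f : (fpow F a).obj X ⟶ (fpow F b).obj Y) (g : (fpow F b).obj Y ⟶ (fpow F c).obj Z),
      lift a b m n hab f ≫ lift b c n p hbc g = lift a c m p hac (f ≫ g)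
  lift_add : ∀ {X Y : D} (a b : ℕ) (m n : ℤ) (h : (a : ℤ) + n = (b : ℤ) + m)
      (f g : (fpow F a).obj X ⟶ (fpow F b).obj Y),
      lift a b m n h (f + g) = lift a b m n h f + lift a b m n h g
  lift_surj : ∀ {X Y : D} {m n : ℤ} (φ : obj X m ⟶ obj Y n),
      ∃ (a b : ℕ) (h : (a : ℤ) + n = (b : ℤ) + m) (f : (fpow F a).obj X ⟶ (fpow F b).obj Y),
        φ = lift a b m n h f
  lift_inj : ∀ {X Y : D} (a b a' b' : ℕ) (m n : ℤ)
      (h : (a : ℤ) + n = (b : ℤ) + m) (h' : (a' : ℤ) + n = (b' : ℤ) + m)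
      (f : (fpow F a).obj X ⟶ (fpow F b).obj Y)
      (f' : (fpow F a').obj X ⟶ (fpow F b').obj Y),
      lift a b m n h f = lift a' b' m n h' f' →
      ∃ (j j' : ℕ), a + j = a' + j' ∧ b + j = b' + j' ∧
        HEq (raiseN F j f) (raiseN F j' f')
  dense : ∀ s : S, ∃ (X : D) (n : ℤ), Nonempty (s ≅ obj X n)

/-- The subcategory `dℤ𝒳` of the stabilization: all objects isomorphic to some
`(X, dk)` with `X ∈ 𝒳`, `k ∈ ℤ`. -/
def dZSet {D : Type u'} [Category.{v'} D] [Preadditive D] {F : D ⥤ D}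
    {S : Type w} [Category.{w'} S] [Preadditive S] (st : IsStabilization F S)
    (X : Set D) (d : ℕ) : Set S :=
  {s | ∃ (A : D) (k : ℤ), A ∈ X ∧ Nonempty (s ≅ st.obj A ((d : ℤ) * k))}

/-- The standard triangles of the stabilization of a left triangulated category:
those induced by a sequence in `D` whose sign-twist by `(-1)^k` is a triangle. -/
def stdTriangles {D : Type u'} [Category.{v'} D] [Preadditive D] [HasZeroObject D]
    {Om : D ⥤ D} (L : LeftTriangStruct D Om)
    {S : Type w} [Category.{w'} S] [Preadditive S] (st : IsStabilization Om S)
    (Se : S ≌ S) (σ : ∀ (A : D) (n : ℤ), Se.functor.obj (st.obj A n) ≅ st.obj A (n - 1)) :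
    Set (Tri S Se.functor) :=
  {T | ∃ (C₁ C₂ C₃ : D) (n₁ n₂ n₃ k : ℤ) (a₁ a₂ a₃ : ℕ),
    (a₁ : ℤ) = n₁ + k ∧ (a₂ : ℤ) = n₂ + k ∧ (a₃ : ℤ) = n₃ + k ∧
    ∃ (u : (fpow Om (a₁ + 1)).obj C₁ ⟶ (fpow Om a₃).obj C₃)
      (v : (fpow Om a₃).obj C₃ ⟶ (fpow Om a₂).obj C₂)
      (w : (fpow Om a₂).obj C₂ ⟶ (fpow Om a₁).obj C₁)
      (h₁ : (a₃ : ℤ) + n₂ = (a₂ : ℤ) + n₃) (h₂ : (a₂ : ℤ) + n₁ = (a₁ : ℤ) + n₂)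
      (h₃ : ((a₁ + 1 : ℕ) : ℤ) + (n₃ - 1) = (a₃ : ℤ) + n₁),
      LTTriangle.mk ((fpow Om a₃).obj C₃) ((fpow Om a₂).obj C₂) ((fpow Om a₁).obj C₁)
        (((k.negOnePow : ℤˣ) : ℤ) • u) (((k.negOnePow : ℤˣ) : ℤ) • v)
        (((k.negOnePow : ℤˣ) : ℤ) • w) ∈ L.dist ∧
      T = Tri.mk (st.obj C₃ n₃) (st.obj C₂ n₂) (st.obj C₁ n₁)
            (st.lift a₃ a₂ n₃ n₂ h₁ v) (st.lift a₂ a₁ n₂ n₁ h₂ w)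
            (st.lift (a₁ + 1) a₃ n₁ (n₃ - 1) h₃ u ≫ (σ C₃ n₃).inv)}

/-- The syzygy functor `Ω` on the stable category, together with its defining data:
for each object a chosen conflation `0 → K X → P X → X → 0` with `P X` projective,
identifications `Ω(X̲) ≅ K X`, and the characterization of `Ω` on morphisms by
lifting along these conflations. -/
structure SyzygyFunctor (E : ExactStructure C) where
  Om : St E ⥤ St E
  P : C → C
  projP : ∀ X : C, E.Proj (P X)
  K : C → C
  i : ∀ X : C, K X ⟶ P X
  p : ∀ X : C, P X ⟶ X
  sesX : ∀ X : C, E.ses (i X) (p X)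
  iso : ∀ X : C, Om.obj ((stq E).obj X) ≅ (stq E).obj (K X)
  map_spec : ∀ {X Y : C} (f : X ⟶ Y) (g : P X ⟶ P Y) (k : K X ⟶ K Y),
      g ≫ p Y = p X ≫ f → i X ≫ g = k ≫ i Y →
      Om.map ((stq E).map f) = (iso X).hom ≫ (stq E).map k ≫ (iso Y).inv

/-- The standard triangles of the stable category of an exact category with enough
projectives (Theorem 3.2): `Ω E₁ → E₃ → E₂ → E₁` induced by a conflation
`0 → E₃ → E₂ → E₁ → 0` and a lift of diagrams against `0 → K E₁ → P E₁ → E₁ → 0`. -/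
def stdStableTriangles (E : ExactStructure C) (SF : SyzygyFunctor E) :
    Set (LTTriangle (St E) SF.Om) :=
  {T | ∃ (E₁ E₂ E₃ : C) (v : E₃ ⟶ E₂) (w : E₂ ⟶ E₁) (_ : E.ses v w)
      (u : SF.K E₁ ⟶ E₃) (g : SF.P E₁ ⟶ E₂),
      SF.i E₁ ≫ g = u ≫ v ∧ g ≫ w = SF.p E₁ ∧
      (LTTriangle.mk ((stq E).obj E₃) ((stq E).obj E₂) ((stq E).obj E₁)
        ((SF.iso E₁).hom ≫ (stq E).map u) ((stq E).map v) ((stq E).map w)).IsoSeq T}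

/-- Gorenstein projective objects: cycles of totally acyclic complexes of projectives.
The totally acyclic complex is encoded by its sequence of conflations
`0 → G_i → P_i → G_{i-1} → 0` with `P_i` projective, together with the condition that
each map `G_i → Q` to a projective extends to `P_i` (i.e. `Hom(P_•, Q)` is acyclic). -/
def GorensteinProj (E : ExactStructure C) (G : C) : Prop :=
  ∃ (Gs Ps : ℤ → C) (g : ∀ i : ℤ, Gs i ⟶ Ps i) (p : ∀ i : ℤ, Ps i ⟶ Gs (i - 1)),
    Gs 0 = G ∧ ∀ i : ℤ, E.Proj (Ps i) ∧ E.ses (g i) (p i) ∧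
      (∀ Q : C, E.Proj Q → ∀ f : Gs i ⟶ Q, ∃ h : Ps i ⟶ Q, g i ≫ h = f)

/-- `Syz E n X W` : `W` is an `n`-th syzygy of `X`, i.e. there is a chain of
conflations `0 → K_{j+1} → P_j → K_j → 0` with each `P_j` projective, `K_0 = X`,
`K_n = W`. -/
inductive Syz (E : ExactStructure C) : ℕ → C → C → Prop
  | zero (X : C) : Syz E 0 X X
  | succ {n : ℕ} {X K W P : C} (h : Syz E n X K) (hP : E.Proj P) (w : W ⟶ P) (p : P ⟶ K)
      (hs : E.ses w p) : Syz E (n + 1) X W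

/-- `X` has finite Gorenstein projective dimension: some syzygy `Ω^n(X̲)` is
(stably isomorphic to) a Gorenstein projective object. -/
def FiniteGPdim (E : ExactStructure C) (X : C) : Prop :=
  ∃ (n : ℕ) (W G : C), Syz E n X W ∧ GorensteinProj E G ∧
    Nonempty ((stq E).obj W ≅ (stq E).obj G)

end Paper

namespace Paper

section Auxiliary

variable {C : Type u} [Category.{v} C] [Preadditive C] [HasZeroObject C] [HasBinaryBiproducts C]

/-! ### Basic facts about exact structures -/

lemma proj_zero (E : ExactStructure C) : E.Proj (0 : C) := by
  intro Y Z g _ h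
  exact ⟨0, (Limits.isZero_zero C).eq_of_src _ _⟩

lemma proj_biprod (E : ExactStructure C) {P Q : C} (hP : E.Proj P) (hQ : E.Proj Q) :
    E.Proj (P ⊞ Q) := by
  intro Y Z g hg h
  obtain ⟨k₁, hk₁⟩ := hP g hg (biprod.inl ≫ h)
  obtain ⟨k₂, hk₂⟩ := hQ g hg (biprod.inr ≫ h)
  exact ⟨biprod.desc k₁ k₂, by apply biprod.hom_ext' <;> simp [hk₁, hk₂]⟩

instance stableRel_congruence (E : ExactStructure C) : Congruence (stableRel E) where
  equivalence :=
    { refl := fun f => ⟨0, 0, 0, proj_zero E, by simp⟩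
      symm := by
        rintro f g ⟨P, a, b, hP, hab⟩
        exact ⟨P, -a, b, hP, by rw [Preadditive.neg_comp, hab, neg_sub]⟩
      trans := by
        rintro f g h' ⟨P, a, b, hP, hab⟩ ⟨P', a', b', hP', hab'⟩
        refine ⟨P ⊞ P', biprod.lift a a', biprod.desc b b', proj_biprod E hP hP', ?_⟩
        rw [biprod.lift_desc, hab, hab']; abel }
  comp_left := by
    rintro X Y Z f g g' ⟨P, a, b, hP, hab⟩
    exact ⟨P, f ≫ a, b, hP, by rw [Category.assoc, hab, Preadditive.comp_sub]⟩
  comp_right := by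
    rintro X Y Z f f' g ⟨P, a, b, hP, hab⟩
    exact ⟨P, a, b ≫ g, hP, by rw [← Category.assoc, hab, Preadditive.sub_comp]⟩

lemma ExactStructure.ses_epi_cancel (E : ExactStructure C) {X Y Z T : C} {f : X ⟶ Y}
    {g : Y ⟶ Z} (h : E.ses f g) {a b : Z ⟶ T} (hab : g ≫ a = g ≫ b) : a = b :=
  Cofork.IsColimit.hom_ext (E.isCokernel h).some (by simpa using hab)

lemma ExactStructure.ses_mono_cancel (E : ExactStructure C) {X Y Z T : C} {f : X ⟶ Y}
    {g : Y ⟶ Z} (h : E.ses f g) {a b : T ⟶ X} (hab : a ≫ f = b ≫ f) : a = b :=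
  Fork.IsLimit.hom_ext (E.isKernel h).some (by simpa using hab)

lemma ExactStructure.ses_lift (E : ExactStructure C) {X Y Z T : C} {f : X ⟶ Y} {g : Y ⟶ Z}
    (h : E.ses f g) (t : T ⟶ Y) (ht : t ≫ g = 0) : ∃ l : T ⟶ X, l ≫ f = t := by
  obtain ⟨l, hl⟩ := KernelFork.IsLimit.lift' (E.isKernel h).some t ht
  exact ⟨l, by simpa using hl⟩

lemma ExactStructure.ses_desc (E : ExactStructure C) {X Y Z T : C} {f : X ⟶ Y} {g : Y ⟶ Z}
    (h : E.ses f g) (t : Y ⟶ T) (ht : f ≫ t = 0) : ∃ l : Z ⟶ T, g ≫ l = t := by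
  obtain ⟨l, hl⟩ := CokernelCofork.IsColimit.desc' (E.isCokernel h).some t ht
  exact ⟨l, by simpa using hl⟩

/-! ### Syzygy powers and the standard resolution extension -/

variable {E : ExactStructure C}

/-- Iterated syzygy objects. -/
def SyzygyFunctor.Kpow (SF : SyzygyFunctor E) : ℕ → C → C
  | 0, X => X
  | n + 1, X => SF.K (SF.Kpow n X)

/-- The standard projective-resolution `n`-extension `0 → Ωⁿ A → P_{n-1} → ⋯ → P₀ → A → 0`. -/
def SyzygyFunctor.resExt (SF : SyzygyFunctor E) (A : C) :
    (n : ℕ) → NExt E (n + 1) A (SF.Kpow (n + 1) A)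
  | 0 => NExt.one (SF.i A) (SF.p A) (SF.sesX A)
  | n + 1 => NExt.step (SF.i (SF.Kpow (n + 1) A)) (SF.p (SF.Kpow (n + 1) A))
      (SF.sesX (SF.Kpow (n + 1) A)) (SF.resExt A n)

lemma resToTriv (E : ExactStructure C) (SF : SyzygyFunctor E) (A : C) : ∀ n : ℕ,
    NExtMor E (0 : SF.Kpow (n + 1) A ⟶ (0 : C)) (𝟙 A) (SF.resExt A n) (trivN E n A)
  | 0 => NExtMor.one (SF.p A)
      (by exact (E.comp_zero (SF.sesX A)).trans zero_comp.symm) (by rw [Category.comp_id])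
  | n + 1 => NExtMor.step 0 0
      ((Limits.isZero_zero C).eq_of_tgt _ _) ((Limits.isZero_zero C).eq_of_tgt _ _)
      (resToTriv E SF A n)

/-- Comparison of the standard resolution extension with an arbitrary extension. -/
lemma compare (E : ExactStructure C) (SF : SyzygyFunctor E) (A : C) :
    ∀ {n : ℕ} {K'' : C} (ξ : NExt E (n + 1) A K''),
      ∃ u : SF.Kpow (n + 1) A ⟶ K'', NExtMor E u (𝟙 A) (SF.resExt A n) ξ := by
  intro n
  induction n with
  | zero =>
    intro K'' ξ
    cases ξ with
    | one f₁ g₁ h₁ =>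
      obtain ⟨q, hq⟩ := SF.projP A g₁ ⟨_, f₁, h₁⟩ (SF.p A)
      obtain ⟨u, hu⟩ := E.ses_lift h₁ (SF.i A ≫ q)
        (by rw [Category.assoc, hq]; exact E.comp_zero (SF.sesX A))
      exact ⟨u, NExtMor.one q hu.symm (by rw [hq, Category.comp_id])⟩
    | step f₁ g₁ h₁ ξt => cases ξt
  | succ n ih =>
    intro K'' ξ
    cases ξ with
    | step f₁ g₁ h₁ ξt =>
      obtain ⟨ut, Φt⟩ := ih ξt
      obtain ⟨q, hq⟩ := SF.projP (SF.Kpow (n + 1) A) g₁ ⟨_, f₁, h₁⟩ (SF.p (SF.Kpow (n + 1) A) ≫ ut)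
      obtain ⟨u, hu⟩ := E.ses_lift h₁ (SF.i (SF.Kpow (n + 1) A) ≫ q)
        (by rw [Category.assoc, hq, ← Category.assoc, E.comp_zero (SF.sesX (SF.Kpow (n + 1) A)),
          zero_comp])
      exact ⟨u, NExtMor.step q ut hu.symm hq Φt⟩

end Auxiliary

section StableAux

variable {C : Type u} [Category.{v} C] [Preadditive C] [HasZeroObject C] [HasBinaryBiproducts C]
variable (E : ExactStructure C) [Preadditive (St E)] [HasZeroObject (St E)]

lemma stq_map_zero
    (hadd : ∀ (X Y : C) (f g : X ⟶ Y), (stq E).map (f + g) = (stq E).map f + (stq E).map g)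
    {X Y : C} : (stq E).map (0 : X ⟶ Y) = 0 := by
  have h := hadd X Y 0 0
  rw [add_zero] at h
  exact left_eq_add.mp h

lemma stq_isZero
    (hadd : ∀ (X Y : C) (f g : X ⟶ Y), (stq E).map (f + g) = (stq E).map f + (stq E).map g)
    {R : C} (hR : E.Proj R) : IsZero ((stq E).obj R) := by
  rw [IsZero.iff_id_eq_zero]
  have h1 : (stq E).map (𝟙 R) = (stq E).map 0 :=
    CategoryTheory.Quotient.sound _ ⟨R, 𝟙 R, 𝟙 R, hR, by simp⟩
  calc 𝟙 ((stq E).obj R) = (stq E).map (𝟙 R) := ((stq E).map_id R).symm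
    _ = (stq E).map 0 := h1
    _ = 0 := stq_map_zero E hadd

/-- The canonical identification `Ωʲ(A̲) ≅ (Ωʲ A)̲`. -/
noncomputable def kIso (SF : SyzygyFunctor E) (X : C) :
    (j : ℕ) → ((fpow SF.Om j).obj ((stq E).obj X) ≅ (stq E).obj (SF.Kpow j X))
  | 0 => Iso.refl _
  | j + 1 => SF.Om.mapIso (kIso SF X j) ≪≫ SF.iso (SF.Kpow j X)

/-- Exactness of a distinguished left triangle at the middle object. -/
lemma lt_exact {Om : St E ⥤ St E} (L : LeftTriangStruct (St E) Om)
    (T : LTTriangle (St E) Om) (hT : T ∈ L.dist) {U : St E} (φ : U ⟶ T.obj₂)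
    (hφ : φ ≫ T.m₂ = 0) : ∃ ψ : U ⟶ T.obj₁, ψ ≫ T.m₁ = φ := by
  obtain ⟨f, h1, _⟩ := L.complete_mor _ _ (L.contractible U) hT φ 0 (by simp [hφ])
  exact ⟨f, by simpa using h1.symm⟩

/-- Every conflation induces a standard distinguished triangle in the stable category. -/
lemma std_mem (SF : SyzygyFunctor E) (L : LeftTriangStruct (St E) SF.Om)
    (hdist : L.dist = stdStableTriangles E SF) {R W V : C} {k : R ⟶ W} {v : W ⟶ V}
    (hkv : E.ses k v) :
    ∃ m₀ : SF.Om.obj ((stq E).obj V) ⟶ (stq E).obj R,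
      LTTriangle.mk ((stq E).obj R) ((stq E).obj W) ((stq E).obj V)
        m₀ ((stq E).map k) ((stq E).map v) ∈ L.dist := by
  obtain ⟨g₀, hg₀⟩ := SF.projP V v ⟨_, k, hkv⟩ (SF.p V)
  obtain ⟨u₀, hu₀⟩ := E.ses_lift hkv (SF.i V ≫ g₀)
    (by rw [Category.assoc, hg₀]; exact E.comp_zero (SF.sesX V))
  refine ⟨(SF.iso V).hom ≫ (stq E).map u₀, ?_⟩
  rw [hdist]
  exact ⟨V, W, R, k, v, hkv, u₀, g₀, hu₀.symm, hg₀,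
    Iso.refl _, Iso.refl _, Iso.refl _, by simp, by simp, by simp⟩

/-- A conflation with projective kernel gives a stable section of `Ω` applied to its
deflation. -/
lemma sect_of_proj
    (hadd : ∀ (X Y : C) (f g : X ⟶ Y), (stq E).map (f + g) = (stq E).map f + (stq E).map g)
    (SF : SyzygyFunctor E) (L : LeftTriangStruct (St E) SF.Om)
    (hdist : L.dist = stdStableTriangles E SF) {R W V : C} {k : R ⟶ W} {v : W ⟶ V}
    (hkv : E.ses k v) (hR : E.Proj R) :
    ∃ j : SF.Om.obj ((stq E).obj V) ⟶ SF.Om.obj ((stq E).obj W),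
      j ≫ SF.Om.map ((stq E).map v) = 𝟙 _ := by
  obtain ⟨m₀, hT⟩ := std_mem E SF L hdist hkv
  have hT1 := L.rotate _ hT
  have hT2 := L.rotate _ hT1
  have hT2' : LTTriangle.mk (SF.Om.obj ((stq E).obj W)) (SF.Om.obj ((stq E).obj V))
      ((stq E).obj R) (-SF.Om.map ((stq E).map k)) (-SF.Om.map ((stq E).map v)) m₀
      ∈ L.dist := hT2
  obtain ⟨ψ, hψ⟩ := lt_exact E L _ hT2' (𝟙 (SF.Om.obj ((stq E).obj V)))
    ((stq_isZero E hadd hR).eq_of_tgt _ _)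
  have hψ' : ψ ≫ (-SF.Om.map ((stq E).map v)) = 𝟙 _ := hψ
  exact ⟨-ψ, by simpa using hψ'⟩

/-- Key extension lemma: every map `Ω^{t+1} M₀ → M₁` extends along the inflation
`Ω^{t+1} M₀ → P(Ωᵗ M₀)`. -/
lemma extend_lemma
    (hadd : ∀ (X Y : C) (f g : X ⟶ Y), (stq E).map (f + g) = (stq E).map f + (stq E).map g)
    (SF : SyzygyFunctor E) (L : LeftTriangStruct (St E) SF.Om)
    (hdist : L.dist = stdStableTriangles E SF)
    (X : Set (St E)) (d : ℕ) (hX : ClusterTiltingLT L X d)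
    (M₀ M₁ : C) (h₀ : (stq E).obj M₀ ∈ X) (h₁ : (stq E).obj M₁ ∈ X)
    (t : ℕ) (ht : t + 2 ≤ d)
    (u : SF.K (SF.Kpow t M₀) ⟶ M₁) :
    ∃ g' : SF.P (SF.Kpow t M₀) ⟶ M₁, SF.i (SF.Kpow t M₀) ≫ g' = u := by
  -- Step 1: the map vanishes in the stable category.
  have hv : (stq E).map u = 0 := by
    have h0 := hX.hom_vanish _ _ h₁ h₀ (t + 1) (Nat.succ_le_succ (Nat.zero_le t)) (by omega)
      ((kIso E SF M₀ (t + 1)).hom ≫ (stq E).map u)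
    have h1 := congrArg (fun φ => (kIso E SF M₀ (t + 1)).inv ≫ φ) h0
    simp only [Iso.inv_hom_id_assoc, Limits.comp_zero] at h1
    exact h1
  have hrel : stableRel E u 0 := by
    refine (Quotient.functor_map_eq_iff (stableRel E) u 0).mp ?_
    change (stq E).map u = (stq E).map 0
    rw [hv, stq_map_zero E hadd]
  obtain ⟨R, c, e, hR, hce⟩ := hrel
  rw [sub_zero] at hce
  -- Step 2: push out the syzygy conflation along `c`.
  obtain ⟨W, h, k, hkinf, hpo⟩ :=
    E.pushout_infl (SF.i (SF.Kpow t M₀)) c ⟨_, SF.p (SF.Kpow t M₀), SF.sesX (SF.Kpow t M₀)⟩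
  obtain ⟨V, v, hkv⟩ := hkinf
  have hcomm : SF.i (SF.Kpow t M₀) ≫ h = c ≫ k := hpo.w
  -- Compare `V` with `Ωᵗ M₀`.
  obtain ⟨ζ, hζ⟩ := E.ses_desc (SF.sesX (SF.Kpow t M₀)) (h ≫ v)
    (by rw [← Category.assoc, hcomm, Category.assoc, E.comp_zero hkv, Limits.comp_zero])
  have hdesc : SF.i (SF.Kpow t M₀) ≫ SF.p (SF.Kpow t M₀) = c ≫ (0 : R ⟶ SF.Kpow t M₀) := by
    rw [E.comp_zero (SF.sesX (SF.Kpow t M₀)), Limits.comp_zero]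
  set wmap := hpo.desc (SF.p (SF.Kpow t M₀)) 0 hdesc with hwmap
  have hhw : h ≫ wmap = SF.p (SF.Kpow t M₀) := hpo.inl_desc _ _ _
  have hkw : k ≫ wmap = 0 := hpo.inr_desc _ _ _
  obtain ⟨ξ₂, hξ₂⟩ := E.ses_desc hkv wmap hkw
  have hζξ : ζ ≫ ξ₂ = 𝟙 (SF.Kpow t M₀) := E.ses_epi_cancel (SF.sesX (SF.Kpow t M₀))
    (by rw [← Category.assoc, hζ, Category.assoc, hξ₂, hhw, Category.comp_id])
  have hwζ : wmap ≫ ζ = v := hpo.hom_ext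
    (by rw [← Category.assoc, hhw, hζ])
    (by rw [← Category.assoc, hkw, zero_comp, E.comp_zero hkv])
  have hξζ : ξ₂ ≫ ζ = 𝟙 V := E.ses_epi_cancel hkv
    (by rw [← Category.assoc, hξ₂, hwζ, Category.comp_id])
  -- Step 3: a stable section of `v`.
  obtain ⟨j, hj⟩ := sect_of_proj E hadd SF L hdist hkv hR
  have bijW := hX.om_bij ((stq E).obj W) ((stq E).obj M₀) h₀ t (by omega)
  have bijV := hX.om_bij ((stq E).obj V) ((stq E).obj M₀) h₀ t (by omega)
  set α : (fpow SF.Om t).obj ((stq E).obj M₀) ≅ (stq E).obj V :=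
    kIso E SF M₀ t ≪≫ (stq E).mapIso ⟨ζ, ξ₂, hζξ, hξζ⟩ with hα
  obtain ⟨s₀, hs₀⟩ := bijW.2 (SF.Om.map α.hom ≫ j)
  replace hs₀ : SF.Om.map s₀ = SF.Om.map α.hom ≫ j := hs₀
  have hs : s₀ ≫ (stq E).map v = α.hom := by
    apply bijV.1
    show SF.Om.map (s₀ ≫ (stq E).map v) = SF.Om.map α.hom
    rw [SF.Om.map_comp, hs₀, Category.assoc, hj, Category.comp_id]
  have hfull : (stq E).Full := Quotient.full_functor (stableRel E)
  obtain ⟨σ, hσ⟩ := hfull.map_surjective (α.inv ≫ s₀)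
  have hσv : (stq E).map (σ ≫ v) = (stq E).map (𝟙 V) := by
    rw [(stq E).map_comp, hσ, (stq E).map_id, Category.assoc, hs, Iso.inv_hom_id]
  have hrel2 : stableRel E (σ ≫ v) (𝟙 V) :=
    (Quotient.functor_map_eq_iff (stableRel E) _ _).mp hσv
  obtain ⟨R', c', e', hR', hce'⟩ := hrel2
  obtain ⟨et, het⟩ := hR' v ⟨R, k, hkv⟩ e'
  have hσ'v : (σ - c' ≫ et) ≫ v = 𝟙 V := by
    rw [Preadditive.sub_comp, Category.assoc, het, hce', sub_sub_cancel]
  -- Step 4: a retraction of `k`, and the extension.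
  obtain ⟨r, hr⟩ := E.ses_lift hkv (𝟙 W - v ≫ (σ - c' ≫ et))
    (by rw [Preadditive.sub_comp, Category.id_comp, Category.assoc, hσ'v, Category.comp_id,
      sub_self])
  have hkr : k ≫ r = 𝟙 R := by
    apply E.ses_mono_cancel hkv
    rw [Category.assoc, hr, Preadditive.comp_sub, Category.comp_id, ← Category.assoc,
      E.comp_zero hkv, zero_comp, sub_zero, Category.id_comp]
  refine ⟨h ≫ r ≫ e, ?_⟩
  have hassoc : SF.i (SF.Kpow t M₀) ≫ h ≫ r ≫ e = c ≫ (k ≫ r) ≫ e := by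
    rw [← Category.assoc, hcomm]; simp only [Category.assoc]
  rw [hassoc, hkr, Category.id_comp, hce]

end StableAux

/-- Lemma 6.4. Let `ℰ` be an exact category with enough
projectives, `𝒳` a `d`-cluster tilting subcategory of the stable category `ℰ̲`, and
`ℳ = {E ∈ ℰ : E̲ ∈ 𝒳}`.  Then `Ext^i(M, M') = 0` for all `M, M' ∈ ℳ` and
`1 ≤ i ≤ d-1`. -/
theorem statement12 {C : Type u} [Category.{v} C] [Preadditive C] [HasZeroObject C]
    [HasBinaryBiproducts C] (E : ExactStructure C) (hEP : EnoughProj E)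
    [Preadditive (St E)] [HasZeroObject (St E)]
    (hadd : ∀ (X Y : C) (f g : X ⟶ Y),
      (stq E).map (f + g) = (stq E).map f + (stq E).map g)
    (SF : SyzygyFunctor E) (L : LeftTriangStruct (St E) SF.Om)
    (hdist : L.dist = stdStableTriangles E SF)
    (X : Set (St E)) (d : ℕ) (hd : 0 < d) (hX : ClusterTiltingLT L X d)
    (M₀ M₁ : C) (h₀ : (stq E).obj M₀ ∈ X) (h₁ : (stq E).obj M₁ ∈ X)
    (i : ℕ) (hi : 1 ≤ i) (hi' : i + 1 ≤ d) : extVanish E i M₀ M₁ := by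
  cases i with
  | zero => trivial
  | succ n =>
    show ∀ ξ : NExt E (n + 1) M₀ M₁, ExtEquiv E ξ (trivExt E n M₀ M₁)
    intro ξ
    cases n with
    | zero =>
      cases ξ with
      | one f g h =>
        obtain ⟨q, hq⟩ := SF.projP M₀ g ⟨_, f, h⟩ (SF.p M₀)
        obtain ⟨u, hu⟩ := E.ses_lift h (SF.i M₀ ≫ q)
          (by rw [Category.assoc, hq]; exact E.comp_zero (SF.sesX M₀))
        obtain ⟨g', hg'0⟩ := extend_lemma E hadd SF L hdist X d hX M₀ M₁ h₀ h₁ 0 (by omega) u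
        have hg' : SF.i M₀ ≫ g' = u := hg'0
        obtain ⟨s, hsfac⟩ := E.ses_desc (SF.sesX M₀) (q - (show SF.P M₀ ⟶ _ from g') ≫ f)
          (by rw [Preadditive.comp_sub, ← Category.assoc, hg', hu, sub_self])
        have hsg : s ≫ g = 𝟙 M₀ := E.ses_epi_cancel (SF.sesX M₀)
          (by rw [← Category.assoc, hsfac, Preadditive.sub_comp, Category.assoc,
            E.comp_zero h, Limits.comp_zero, sub_zero, hq, Category.comp_id])
        have mor : NExtMor E (𝟙 M₁) (𝟙 M₀) (trivExt E 0 M₀ M₁) (NExt.one f g h) :=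
          NExtMor.one (biprod.desc f s) (by rw [biprod.inl_desc, Category.id_comp])
            (by apply biprod.hom_ext' <;> simp [E.comp_zero h, hsg])
        exact Relation.EqvGen.symm _ _ (Relation.EqvGen.rel _ _ mor)
      | step f g h ξt => cases ξt
    | succ m =>
      cases ξ with
      | step f g h ξt =>
        obtain ⟨u', Φ'⟩ := compare E SF M₀ ξt
        obtain ⟨q, hq⟩ := SF.projP (SF.Kpow (m + 1) M₀) g ⟨_, f, h⟩
          (SF.p (SF.Kpow (m + 1) M₀) ≫ u')
        obtain ⟨u, hu⟩ := E.ses_lift h (SF.i (SF.Kpow (m + 1) M₀) ≫ q)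
          (by rw [Category.assoc, hq, ← Category.assoc,
            E.comp_zero (SF.sesX (SF.Kpow (m + 1) M₀)), zero_comp])
        obtain ⟨g', hg'⟩ := extend_lemma E hadd SF L hdist X d hX M₀ M₁ h₀ h₁ (m + 1)
          (by omega) u
        obtain ⟨s, hsfac⟩ := E.ses_desc (SF.sesX (SF.Kpow (m + 1) M₀)) (q - g' ≫ f)
          (by rw [Preadditive.comp_sub, ← Category.assoc, hg', hu, sub_self])
        have hsg : s ≫ g = u' := E.ses_epi_cancel (SF.sesX (SF.Kpow (m + 1) M₀))
          (by rw [← Category.assoc, hsfac, Preadditive.sub_comp, Category.assoc,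
            E.comp_zero h, Limits.comp_zero, sub_zero, hq])
        have morξ : NExtMor E (𝟙 M₁) (𝟙 M₀)
            (NExt.step (biprod.inl : M₁ ⟶ M₁ ⊞ SF.Kpow (m + 1) M₀) biprod.snd
              (E.ses_split M₁ (SF.Kpow (m + 1) M₀)) (SF.resExt M₀ m))
            (NExt.step f g h ξt) :=
          NExtMor.step (biprod.desc f s) u' (by rw [biprod.inl_desc, Category.id_comp])
            (by apply biprod.hom_ext' <;> simp [E.comp_zero h, hsg]) Φ'
        have mortriv : NExtMor E (𝟙 M₁) (𝟙 M₀)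
            (NExt.step (biprod.inl : M₁ ⟶ M₁ ⊞ SF.Kpow (m + 1) M₀) biprod.snd
              (E.ses_split M₁ (SF.Kpow (m + 1) M₀)) (SF.resExt M₀ m))
            (trivExt E (m + 1) M₀ M₁) :=
          NExtMor.step biprod.fst 0 (by simp) (by simp) (resToTriv E SF M₀ m)
        exact Relation.EqvGen.trans _ _ _
          (Relation.EqvGen.symm _ _ (Relation.EqvGen.rel _ _ morξ))
          (Relation.EqvGen.rel _ _ mortriv)

end Paper
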